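/- Let Ψ(u) = ½‖u‖₂², C ⊆ ℝ^p a nonempty closed convex set, and Ω = Ψ + I_C. Then for any θ ∈ ℝ^p and any u ∈ C, the Fenchel-Young loss satisfies S_Ω(θ, u) ≥ ½‖u − P_C(θ)‖₂² ≥ 0, where P_C is the Euclidean projection onto C. Consequently, if ε ≤ 2σ‖u − P_C(θ)‖₂ for some σ > 0, then S_Ω(θ, u) ≥ ε²/(8σ²). -/
import Mathlib


open scoped RealInnerProductSpace

/-- Calibration lower bound for the Euclidean projection-based loss:
`S_{Ψ+I_C}(θ, u) ≥ ½‖u − P_C(θ)‖² ≥ 0`, and if `ε ≤ 2σ‖u − P_C(θ)‖` with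
`σ > 0` then `S_{Ψ+I_C}(θ, u) ≥ ε²/(8σ²)`. -/
theorem projection_loss_calibration_bound
    (p : ℕ) (C : Set (EuclideanSpace ℝ (Fin p)))
    (hCne : C.Nonempty) (hCclosed : IsClosed C) (hCconv : Convex ℝ C)
    (θ P : EuclideanSpace ℝ (Fin p))
    (hP : P ∈ C ∧ ∀ w ∈ C, ‖P - θ‖ ≤ ‖w - θ‖) :
    ∀ u ∈ C,
      ((1 / 2) * ‖u - P‖ ^ 2
          ≤ sSup ((fun v => ⟪v, θ⟫ - (1 / 2) * ‖v‖ ^ 2) '' C)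
              + (1 / 2) * ‖u‖ ^ 2 - ⟪θ, u⟫
        ∧ (0 : ℝ) ≤ (1 / 2) * ‖u - P‖ ^ 2)
      ∧ ∀ ε σ : ℝ, 0 ≤ ε → 0 < σ → ε ≤ 2 * σ * ‖u - P‖ →
          ε ^ 2 / (8 * σ ^ 2)
            ≤ sSup ((fun v => ⟪v, θ⟫ - (1 / 2) * ‖v‖ ^ 2) '' C)
                + (1 / 2) * ‖u‖ ^ 2 - ⟪θ, u⟫ := by
  intro u hu
  set f : EuclideanSpace ℝ (Fin p) → ℝ := fun v => ⟪v, θ⟫ - (1 / 2) * ‖v‖ ^ 2 with hf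
  -- the set is bounded above
  have hbdd : BddAbove (f '' C) := by
    refine ⟨(1 / 2) * ‖θ‖ ^ 2, ?_⟩
    rintro x ⟨v, hv, rfl⟩
    have h1 := norm_sub_sq_real v θ
    have h2 : (0 : ℝ) ≤ ‖v - θ‖ ^ 2 := sq_nonneg _
    simp only [hf]
    nlinarith
  have hle : f P ≤ sSup (f '' C) := le_csSup hbdd ⟨P, hP.1, rfl⟩
  -- projection obtuse-angle property
  have hinner : ⟪θ - P, u - P⟫ ≤ 0 := by
    have hinf : ‖θ - P‖ = ⨅ w : C, ‖θ - w‖ := by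
      haveI : Nonempty C := ⟨⟨P, hP.1⟩⟩
      refine le_antisymm (le_ciInf fun w => ?_) (ciInf_le ⟨0, ?_⟩ (⟨P, hP.1⟩ : C))
      · have := hP.2 w w.2
        rwa [norm_sub_rev P θ, norm_sub_rev (w : EuclideanSpace ℝ (Fin p)) θ] at this
      · rintro x ⟨w, rfl⟩; exact norm_nonneg _
    exact (norm_eq_iInf_iff_real_inner_le_zero hCconv hP.1).mp hinf u hu
  -- Pythagorean-type expansion
  have hexp : ‖u - θ‖ ^ 2 = ‖u - P‖ ^ 2 + 2 * ⟪u - P, P - θ⟫ + ‖P - θ‖ ^ 2 := by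
    have := norm_add_sq_real (u - P) (P - θ)
    rwa [sub_add_sub_cancel] at this
  have hcomm : ⟪u - P, P - θ⟫ = -⟪θ - P, u - P⟫ := by
    rw [← neg_sub θ P, inner_neg_right, real_inner_comm]
  have hPθ := norm_sub_sq_real P θ
  have huθ := norm_sub_sq_real u θ
  have hcomm2 : ⟪u, θ⟫ = ⟪θ, u⟫ := real_inner_comm θ u
  have hle' : ⟪P, θ⟫ - (1 / 2) * ‖P‖ ^ 2 ≤ sSup (f '' C) := hle
  have hmain : (1 / 2) * ‖u - P‖ ^ 2
      ≤ sSup (f '' C) + (1 / 2) * ‖u‖ ^ 2 - ⟪θ, u⟫ := by nlinarith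
  refine ⟨⟨hmain, by positivity⟩, fun ε σ hε hσ hεσ => ?_⟩
  have h8 : (0 : ℝ) < 8 * σ ^ 2 := by positivity
  rw [div_le_iff₀ h8]
  nlinarith [sq_nonneg (2 * σ * ‖u - P‖ - ε), sq_nonneg ε, mul_pos hσ hσ]
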